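/- Let G' = (V',E') be an undirected graph and build G by adding vertices v†, v₁, v₂ and edges: (v†,w) for a fixed w ∈ V', (v₁,v₂), and (v,v₁) for every v ∈ N_{G'}(w). Suppose a spanning subgraph Q of G (obtained by deleting edges only) is a Hamiltonian path of G. Then the endpoints of Q are v† and v₂, and deleting v†, v₁, v₂ from Q and adding back the edge from w to the unique neighbour v' of v₁ in Q ∩ V' yields a Hamiltonian cycle of G'. -/

import Mathlib

/-- The augmented graph `G` of the closeness-hardness reduction: to `G'` we add
three vertices `v† = inr 0`, `v₁ = inr 1`, `v₂ = inr 2` and the edges `(v†,w)`,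
`(v₁,v₂)`, and `(v,v₁)` for every neighbour `v` of `w` in `G'`. -/
def augGraph {V' : Type*} (G' : SimpleGraph V') (w : V') :
    SimpleGraph (V' ⊕ Fin 3) :=
  SimpleGraph.fromRel (fun x y =>
    (∃ a b : V', x = Sum.inl a ∧ y = Sum.inl b ∧ G'.Adj a b) ∨
    (x = Sum.inr 0 ∧ y = Sum.inl w) ∨
    (x = Sum.inr 1 ∧ y = Sum.inr 2) ∨
    (∃ a : V', G'.Adj a w ∧ x = Sum.inl a ∧ y = Sum.inr 1))

namespace HamAux
open SimpleGraph Walk Sum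

variable {V' : Type*} {G' : SimpleGraph V'} {w : V'}

lemma adj_inr0 {z} : (augGraph G' w).Adj (inr 0) z ↔ z = inl w := by
  simp only [augGraph, SimpleGraph.fromRel_adj]
  constructor
  · rintro ⟨hne, h | h⟩ <;> rcases h with ⟨a,b,h1,h2,h3⟩ | ⟨h1,h2⟩ | ⟨h1,h2⟩ | ⟨a,h1,h2,h3⟩ <;>
      simp_all
  · rintro rfl; simp

lemma adj_inr2 {z} : (augGraph G' w).Adj (inr 2) z ↔ z = inr 1 := by
  simp only [augGraph, SimpleGraph.fromRel_adj]
  constructor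
  · rintro ⟨hne, h | h⟩ <;> rcases h with ⟨a,b,h1,h2,h3⟩ | ⟨h1,h2⟩ | ⟨h1,h2⟩ | ⟨a,h1,h2,h3⟩ <;>
      simp_all
  · rintro rfl; simp

lemma adj_inr1 {z} : (augGraph G' w).Adj (inr 1) z ↔
    z = inr 2 ∨ ∃ a : V', G'.Adj a w ∧ z = inl a := by
  simp only [augGraph, SimpleGraph.fromRel_adj]
  constructor
  · rintro ⟨hne, h | h⟩ <;> rcases h with ⟨a,b,h1,h2,h3⟩ | ⟨h1,h2⟩ | ⟨h1,h2⟩ | ⟨a,h1,h2,h3⟩ <;>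
      simp_all
  · rintro (rfl | ⟨a, ha, rfl⟩) <;> simp_all

lemma adj_inl_inl {a b : V'} : (augGraph G' w).Adj (inl a) (inl b) ↔ G'.Adj a b := by
  simp only [augGraph, SimpleGraph.fromRel_adj]
  constructor
  · rintro ⟨hne, h | h⟩ <;> rcases h with ⟨a',b',h1,h2,h3⟩ | ⟨h1,h2⟩ | ⟨h1,h2⟩ | ⟨a',h1,h2,h3⟩ <;>
      simp_all [SimpleGraph.adj_comm]
  · intro h; exact ⟨by simp [h.ne], Or.inl (Or.inl ⟨a, b, rfl, rfl, h⟩)⟩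

end HamAux

namespace HamAux
open SimpleGraph Walk Sum

lemma interior_two_nbrs {V : Type*} {G : SimpleGraph V} {x y u : V} (p : G.Walk x y)
    (hp : p.IsPath) (hu : u ∈ p.support) (hx : u ≠ x) (hy : u ≠ y) :
    ∃ a b, a ≠ b ∧ G.Adj u a ∧ G.Adj u b := by
  induction p with
  | nil => simp only [support_nil, List.mem_singleton] at hu; exact absurd hu hx
  | @cons x' c y' h q ih =>
    rw [Walk.cons_isPath_iff] at hp
    simp only [support_cons, List.mem_cons] at hu
    rcases hu with rfl | hu
    · exact absurd rfl hx
    by_cases huc : u = c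
    · subst huc
      obtain ⟨z, h2, q2, rfl⟩ := (Walk.not_nil_iff (p := q)).mp (Walk.not_nil_of_ne hy)
      refine ⟨x', z, ?_, h.symm, h2⟩
      intro hxz
      apply hp.2
      subst hxz
      simp [q2.start_mem_support]
    · exact ih hp.1 hu huc hy

lemma edge_start {V : Type*} {G : SimpleGraph V} {x y b : V} (p : G.Walk x y)
    (hp : p.IsPath) (he : s(x, b) ∈ p.edges) :
    ∃ (h : G.Adj x b) (q : G.Walk b y), p = Walk.cons h q := by
  induction p with
  | nil => simp at he
  | @cons x' c y' h q ih =>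
    rw [Walk.cons_isPath_iff] at hp
    rw [Walk.edges_cons, List.mem_cons] at he
    rcases he with he | he
    · have hbc : b = c := by
        rw [Sym2.eq_iff] at he
        rcases he with ⟨-, rfl⟩ | ⟨rfl, rfl⟩ <;> rfl
      subst hbc
      exact ⟨h, q, rfl⟩
    · exact absurd (q.fst_mem_support_of_mem_edges he) hp.2

variable {V' : Type*} {G' : SimpleGraph V'} {w : V'}

lemma pull {u₁ u₂ : V' ⊕ Fin 3} (s : (augGraph G' w).Walk u₁ u₂) :
    ∀ (a : V'), u₁ = Sum.inl a → (∀ v ∈ s.support, ∃ b : V', v = Sum.inl b) →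
    ∃ (b : V') (t : G'.Walk a b), u₂ = Sum.inl b ∧ t.support.map Sum.inl = s.support := by
  induction s with
  | nil =>
    rintro a rfl -
    exact ⟨a, Walk.nil, rfl, by simp⟩
  | @cons x' z y' h q ih =>
    rintro a rfl hs
    obtain ⟨c, rfl⟩ := hs z (by simp [q.start_mem_support])
    have hac : G'.Adj a c := adj_inl_inl.mp h
    obtain ⟨b, t, rfl, hsup⟩ := ih c rfl (fun v hv => hs v (by simp [hv]))
    exact ⟨b, Walk.cons hac t, rfl, by simp [hsup]⟩

end HamAux

namespace HamAux
open SimpleGraph Walk Sum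

theorem aux {V' : Type*} [Fintype V'] [DecidableEq V'] (G' : SimpleGraph V') (w : V')
    (hV' : 3 ≤ Fintype.card V')
    (p : (augGraph G' w).Walk (Sum.inr 0) (Sum.inr 2))
    (hp : p.IsPath) (hham : p.IsHamiltonian) :
    ∃ (v : V') (c : G'.Walk v v), c.IsHamiltonianCycle := by
  classical
  -- first edge goes to `w`
  obtain ⟨z1, h1, q, rfl⟩ := (Walk.not_nil_iff (p := p)).mp
    (Walk.not_nil_of_ne (by simp))
  obtain rfl : z1 = Sum.inl w := adj_inr0.mp h1
  rw [Walk.cons_isPath_iff] at hp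
  obtain ⟨hqpath, h0q⟩ := hp
  -- last edge comes from `inr 1`
  have hqr : q.reverse.IsPath := hqpath.reverse
  obtain ⟨z2, h2, r, hrev⟩ := (Walk.not_nil_iff (p := q.reverse)).mp
    (Walk.not_nil_of_ne (by simp))
  obtain rfl : z2 = Sum.inr 1 := adj_inr2.mp h2
  rw [hrev, Walk.cons_isPath_iff] at hqr
  obtain ⟨hrpath, h2r⟩ := hqr
  -- second-to-last edge comes from some `inl v'` adjacent to `w`
  obtain ⟨z3, h3, s, rfl⟩ := (Walk.not_nil_iff (p := r)).mp
    (Walk.not_nil_of_ne (by simp))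
  rw [Walk.cons_isPath_iff] at hrpath
  obtain ⟨hspath, h1s⟩ := hrpath
  have hz3 := adj_inr1.mp h3
  rcases hz3 with rfl | ⟨v', hv', rfl⟩
  · exact absurd (by simp [s.start_mem_support]) h2r
  -- support bookkeeping
  have hsupp : q.support.reverse = Sum.inr 2 :: Sum.inr 1 :: s.support := by
    rw [← Walk.support_reverse, hrev]; simp
  have h2s : Sum.inr 2 ∉ s.support := fun hmem => h2r (by simp [hmem])
  have hs_inl : ∀ v ∈ s.support, ∃ b : V', v = Sum.inl b := by
    rintro (b | i) hv
    · exact ⟨b, rfl⟩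
    exfalso
    fin_cases i
    · exact h0q (List.mem_reverse.mp (hsupp ▸ (by simp; simpa using hv)))
    · exact h1s (by simpa using hv)
    · exact h2s (by simpa using hv)
  obtain ⟨b, t, hb, hmap⟩ := pull s v' rfl hs_inl
  injection hb with hb
  subst hb
  -- `t` is a hamiltonian path of `G'` from `v'` to `w`
  have hnod : t.support.Nodup := by
    have := hspath.support_nodup
    rw [← hmap] at this
    exact (List.nodup_map_iff Sum.inl_injective).mp this
  have tpath : t.IsPath := Walk.IsPath.mk' hnod
  have tham : t.IsHamiltonian := by
    apply tpath.isHamiltonian_of_mem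
    intro v
    have h1' : Sum.inl v ∈ (Walk.cons h1 q).support := hham.mem_support _
    rw [Walk.support_cons, List.mem_cons] at h1'
    rcases h1' with h1' | h1'
    · simp at h1'
    have h2' : Sum.inl v ∈ s.support := by
      have := List.mem_reverse.mpr h1'
      rw [hsupp] at this
      simpa using this
    rw [← hmap] at h2'
    obtain ⟨u, hu, hu'⟩ := List.mem_map.mp h2'
    rwa [← Sum.inl_injective hu']
  -- close the cycle
  have hnotedge : s(w, v') ∉ t.edges := by
    intro he
    rw [Sym2.eq_swap] at he
    obtain ⟨h4, t2, rfl⟩ := edge_start t tpath he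
    rw [Walk.cons_isPath_iff] at tpath
    obtain rfl := Walk.isPath_iff_eq_nil.mp tpath.1
    have := tham.length_eq
    simp only [Walk.length_cons, Walk.length_nil] at this
    omega
  refine ⟨w, Walk.cons hv'.symm t,
    Walk.isHamiltonianCycle_iff_isCycle_and_support_count_tail_eq_one.mpr
      ⟨(Walk.cons_isCycle_iff t hv'.symm).mpr ⟨tpath, hnotedge⟩, fun a => ?_⟩⟩
  rw [Walk.support_cons, List.tail_cons]
  exact tham a

end HamAux

/-- If a Hamiltonian path of the augmented graph `G` exists (a
spanning subgraph of `G` obtained by deleting edges that is a path through all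
vertices), then its endpoints are `v†` and `v₂`, and `G'` has a Hamiltonian
cycle (obtained by deleting `v†,v₁,v₂` from the path and closing the remaining
segment from `w` to the unique `G'`-neighbour `v'` of `v₁` on the path with the
edge `(v',w)`). -/
theorem ham_path_aug_to_ham_cycle
    {V' : Type*} [Fintype V'] [DecidableEq V'] (G' : SimpleGraph V') (w : V') (hV' : 3 ≤ Fintype.card V')
    (x y : V' ⊕ Fin 3) (p : (augGraph G' w).Walk x y)
    (hp : p.IsPath) (hham : p.IsHamiltonian) :
    ((x = Sum.inr 0 ∧ y = Sum.inr 2) ∨ (x = Sum.inr 2 ∧ y = Sum.inr 0)) ∧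
    ∃ (v : V') (c : G'.Walk v v), c.IsHamiltonianCycle := by
  have h0 : x = Sum.inr 0 ∨ y = Sum.inr 0 := by
    by_contra hc
    push_neg at hc
    obtain ⟨a, b, hab, ha, hb⟩ := HamAux.interior_two_nbrs p hp (hham.mem_support _)
      (fun h => hc.1 h.symm) (fun h => hc.2 h.symm)
    rw [HamAux.adj_inr0] at ha hb
    exact hab (ha.trans hb.symm)
  have h2 : x = Sum.inr 2 ∨ y = Sum.inr 2 := by
    by_contra hc
    push_neg at hc
    obtain ⟨a, b, hab, ha, hb⟩ := HamAux.interior_two_nbrs p hp (hham.mem_support _)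
      (fun h => hc.1 h.symm) (fun h => hc.2 h.symm)
    rw [HamAux.adj_inr2] at ha hb
    exact hab (ha.trans hb.symm)
  have hfirst : (x = Sum.inr 0 ∧ y = Sum.inr 2) ∨ (x = Sum.inr 2 ∧ y = Sum.inr 0) := by
    rcases h0 with rfl | rfl <;> rcases h2 with h2 | h2
    · simp at h2
    · exact Or.inl ⟨rfl, h2⟩
    · exact Or.inr ⟨h2, rfl⟩
    · simp at h2
  refine ⟨hfirst, ?_⟩
  rcases hfirst with ⟨rfl, rfl⟩ | ⟨rfl, rfl⟩
  · exact HamAux.aux G' w hV' p hp hham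
  · refine HamAux.aux G' w hV' p.reverse hp.reverse ?_
    apply hp.reverse.isHamiltonian_of_mem
    intro v
    rw [SimpleGraph.Walk.support_reverse, List.mem_reverse]
    exact hham.mem_support v
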